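/- For real numbers l, a, b with 0 < b ≤ a < l ≤ √(a² + b²), the integral ∫_{0}^{π} min(a, l·|cos φ|)·min(b, l·sin φ) dφ equals 2la + 2lb − (a² + b²) − l². -/

import Mathlib

open Real MeasureTheory Filter

/-- `A(l,a) = ∫_0^π min(a, l·|cos φ|) dφ` -/
noncomputable def A2 (l a : ℝ) : ℝ := ∫ φ in (0:ℝ)..π, min a (l * |Real.cos φ|)

/-- `B(l,b) = ∫_0^π min(b, l·sin φ) dφ` -/
noncomputable def B2 (l b : ℝ) : ℝ := ∫ φ in (0:ℝ)..π, min b (l * Real.sin φ)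

/-- `AB(l,a,b) = ∫_0^π min(a, l·|cos φ|)·min(b, l·sin φ) dφ` -/
noncomputable def AB2 (l a b : ℝ) : ℝ :=
  ∫ φ in (0:ℝ)..π, min a (l * |Real.cos φ|) * min b (l * Real.sin φ)

/-- Intersection probability for the 2D Buffon–Laplace needle problem. -/
noncomputable def P2 (l a b : ℝ) : ℝ :=
  (b * A2 l a + a * B2 l b - AB2 l a b) / (π * a * b)

/-- Intersection probability for the 2D spherocylinder Buffon–Laplace problem. -/
noncomputable def P2sc (l σ a b : ℝ) : ℝ :=
  ((b - σ) * A2 l (a - σ) + (a - σ) * B2 l (b - σ) - AB2 l (a - σ) (b - σ)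
    + (σ * a + σ * b - σ ^ 2) * π) / (π * a * b)

/-- `A³ᴰ(l,a) = ∫_0^{π/2} ∫_0^π min(a, l·sin ψ·|cos φ|) dφ dψ` -/
noncomputable def A3 (l a : ℝ) : ℝ :=
  ∫ ψ in (0:ℝ)..(π/2), ∫ φ in (0:ℝ)..π, min a (l * Real.sin ψ * |Real.cos φ|)

/-- `B³ᴰ(l,b) = ∫_0^{π/2} ∫_0^π min(b, l·sin ψ·sin φ) dφ dψ` -/
noncomputable def B3 (l b : ℝ) : ℝ :=
  ∫ ψ in (0:ℝ)..(π/2), ∫ φ in (0:ℝ)..π, min b (l * Real.sin ψ * Real.sin φ)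

/-- `AB³ᴰ(l,a,b) = ∫_0^{π/2} ∫_0^π min(a, l·sin ψ·|cos φ|)·min(b, l·sin ψ·sin φ) dφ dψ` -/
noncomputable def AB3 (l a b : ℝ) : ℝ :=
  ∫ ψ in (0:ℝ)..(π/2), ∫ φ in (0:ℝ)..π,
    min a (l * Real.sin ψ * |Real.cos φ|) * min b (l * Real.sin ψ * Real.sin φ)

/-- `S³ᴰ(l,a,b) = b·A³ᴰ(l,a) + a·B³ᴰ(l,b) − AB³ᴰ(l,a,b)` -/
noncomputable def S3 (l a b : ℝ) : ℝ := b * A3 l a + a * B3 l b - AB3 l a b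

/-- `F(α,β,t) = ∫_α^β √(sin²ψ − t²) dψ` -/
noncomputable def Faux (α β t : ℝ) : ℝ :=
  ∫ ψ in α..β, Real.sqrt (Real.sin ψ ^ 2 - t ^ 2)

/-- `G(α,β,t) = ∫_α^β (π/2 − arcsin(t / sin ψ)) dψ` -/
noncomputable def Gaux (α β t : ℝ) : ℝ :=
  ∫ ψ in α..β, (π / 2 - Real.arcsin (t / Real.sin ψ))

theorem stmt3 (l a b : ℝ) (hb : 0 < b) (hba : b ≤ a) (hal : a < l)
    (hlL : l ≤ Real.sqrt (a ^ 2 + b ^ 2)) :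
    AB2 l a b = 2 * l * a + 2 * l * b - (a ^ 2 + b ^ 2) - l ^ 2 := by
  unfold AB2
  have ha : 0 < a := lt_of_lt_of_le hb hba
  have hl : 0 < l := ha.trans hal
  have hbl : b < l := lt_of_le_of_lt hba hal
  have hL2 : l ^ 2 ≤ a ^ 2 + b ^ 2 := by
    nlinarith [Real.sq_sqrt (by positivity : (0:ℝ) ≤ a^2+b^2), Real.sqrt_nonneg (a^2+b^2)]
  set f : ℝ → ℝ := fun φ => min a (l * |Real.cos φ|) * min b (l * Real.sin φ) with hf
  have hcont : Continuous f := by fun_prop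
  set φa := Real.arccos (a/l) with hφa
  set φb := Real.arcsin (b/l) with hφb
  have hal1 : a / l ≤ 1 := by rw [div_le_one hl]; exact hal.le
  have hal0 : 0 ≤ a / l := by positivity
  have hbl1 : b / l ≤ 1 := by rw [div_le_one hl]; exact hbl.le
  have hbl0 : 0 ≤ b / l := by positivity
  have hcosφa : Real.cos φa = a / l := Real.cos_arccos (by linarith) hal1
  have hsinφb : Real.sin φb = b / l := Real.sin_arcsin (by linarith) hbl1
  have hφa0 : 0 ≤ φa := Real.arccos_nonneg _
  have hφb2 : φb ≤ π/2 := Real.arcsin_le_pi_div_two _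
  have key1 : Real.sqrt (1 - (a/l)^2) ≤ b / l := by
    rw [show (b/l) = Real.sqrt ((b/l)^2) from (Real.sqrt_sq hbl0).symm]
    apply Real.sqrt_le_sqrt
    rw [div_pow, div_pow, sub_le_iff_le_add, ← add_div, le_div_iff₀ (by positivity)]
    nlinarith
  have key2 : Real.sqrt (1 - (b/l)^2) ≤ a / l := by
    rw [show (a/l) = Real.sqrt ((a/l)^2) from (Real.sqrt_sq hal0).symm]
    apply Real.sqrt_le_sqrt
    rw [div_pow, div_pow, sub_le_iff_le_add, ← add_div, le_div_iff₀ (by positivity)]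
    nlinarith
  have hsinφa : Real.sin φa = Real.sqrt (1 - (a/l)^2) := Real.sin_arccos _
  have hφaφb : φa ≤ φb := by
    rw [hφa, hφb, Real.arccos_eq_arcsin hal0]
    exact Real.monotone_arcsin key1
  have hφa2 : φa ≤ π/2 := hφaφb.trans hφb2
  have hφb0 : 0 ≤ φb := hφa0.trans hφaφb
  have hpi : (0:ℝ) < π := Real.pi_pos
  -- integrability
  have hii : ∀ u v : ℝ, IntervalIntegrable f volume u v := fun u v =>
    hcont.intervalIntegrable u v
  -- symmetry
  have hsym : (∫ φ in (π/2)..π, f φ) = ∫ φ in (0:ℝ)..(π/2), f φ := by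
    have h := intervalIntegral.integral_comp_sub_left (a := 0) (b := π/2) f π
    rw [show π - π/2 = π/2 by ring, sub_zero] at h
    rw [← h]
    apply intervalIntegral.integral_congr
    intro x hx
    simp only [hf, Real.sin_pi_sub, Real.cos_pi_sub, abs_neg]
  -- splitting
  have hsplit : (∫ φ in (0:ℝ)..π, f φ)
      = ((∫ φ in (0:ℝ)..φa, f φ) + (∫ φ in φa..φb, f φ) + (∫ φ in φb..(π/2), f φ)) * 2 := by
    rw [← intervalIntegral.integral_add_adjacent_intervals (hii 0 (π/2)) (hii (π/2) π), hsym,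
        ← intervalIntegral.integral_add_adjacent_intervals (hii 0 φa) (hii φa (π/2)),
        ← intervalIntegral.integral_add_adjacent_intervals (hii φa φb) (hii φb (π/2))]
    ring
  -- piece 1
  have p1 : (∫ φ in (0:ℝ)..φa, f φ) = a * l - a ^ 2 := by
    have : (∫ φ in (0:ℝ)..φa, f φ) = ∫ φ in (0:ℝ)..φa, (a * l) * Real.sin φ := by
      apply intervalIntegral.integral_congr
      intro x hx
      rw [Set.uIcc_of_le hφa0] at hx
      obtain ⟨hx0, hxa⟩ := hx
      have hxpi2 : x ≤ π/2 := hxa.trans hφa2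
      have hcos0 : 0 ≤ Real.cos x := Real.cos_nonneg_of_mem_Icc ⟨by linarith, hxpi2⟩
      have hcosx : a / l ≤ Real.cos x := by
        rw [← hcosφa]
        exact Real.cos_le_cos_of_nonneg_of_le_pi hx0 (by linarith) hxa
      have hsinx : Real.sin x ≤ b / l := by
        calc Real.sin x ≤ Real.sin φa :=
              Real.sin_le_sin_of_le_of_le_pi_div_two (by linarith) hφa2 hxa
          _ ≤ b / l := by rw [hsinφa]; exact key1
      simp only [hf, abs_of_nonneg hcos0]
      rw [min_eq_left (by rw [mul_comm]; exact (div_le_iff₀ hl).mp hcosx),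
          min_eq_right (by rw [mul_comm]; exact (le_div_iff₀ hl).mp hsinx)]
      ring
    rw [this, intervalIntegral.integral_const_mul, integral_sin, Real.cos_zero, hcosφa]
    field_simp
  -- piece 2
  have p2 : (∫ φ in φa..φb, f φ) = (a^2 + b^2 - l^2) / 2 := by
    have : (∫ φ in φa..φb, f φ) = ∫ φ in φa..φb, l^2 * (Real.sin φ * Real.cos φ) := by
      apply intervalIntegral.integral_congr
      intro x hx
      rw [Set.uIcc_of_le hφaφb] at hx
      obtain ⟨hxa, hxb⟩ := hx
      have hxpi2 : x ≤ π/2 := hxb.trans hφb2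
      have hx0 : 0 ≤ x := hφa0.trans hxa
      have hcos0 : 0 ≤ Real.cos x := Real.cos_nonneg_of_mem_Icc ⟨by linarith, hxpi2⟩
      have hcosx : Real.cos x ≤ a / l := by
        rw [← hcosφa]
        exact Real.cos_le_cos_of_nonneg_of_le_pi hφa0 (by linarith) hxa
      have hsinx : Real.sin x ≤ b / l := by
        rw [← hsinφb]
        exact Real.sin_le_sin_of_le_of_le_pi_div_two (by linarith) hφb2 hxb
      simp only [hf, abs_of_nonneg hcos0]
      rw [min_eq_right (by rw [mul_comm]; exact (le_div_iff₀ hl).mp hcosx),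
          min_eq_right (by rw [mul_comm]; exact (le_div_iff₀ hl).mp hsinx)]
      ring
    rw [this, intervalIntegral.integral_const_mul, integral_sin_mul_cos₁, hsinφb]
    have hsa2 : Real.sin φa ^ 2 = 1 - (a/l)^2 := by
      rw [Real.sin_sq, hcosφa]
    rw [hsa2]
    field_simp
    ring
  -- piece 3
  have p3 : (∫ φ in φb..(π/2), f φ) = b * l - b ^ 2 := by
    have : (∫ φ in φb..(π/2), f φ) = ∫ φ in φb..(π/2), (b * l) * Real.cos φ := by
      apply intervalIntegral.integral_congr
      intro x hx
      rw [Set.uIcc_of_le hφb2] at hx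
      obtain ⟨hxb, hxpi2⟩ := hx
      have hx0 : 0 ≤ x := hφb0.trans hxb
      have hcos0 : 0 ≤ Real.cos x := Real.cos_nonneg_of_mem_Icc ⟨by linarith, hxpi2⟩
      have hcosx : Real.cos x ≤ a / l := by
        calc Real.cos x ≤ Real.cos φb :=
              Real.cos_le_cos_of_nonneg_of_le_pi hφb0 (by linarith) hxb
          _ ≤ a / l := by rw [hφb, Real.cos_arcsin]; exact key2
      have hsinx : b / l ≤ Real.sin x := by
        rw [← hsinφb]
        exact Real.sin_le_sin_of_le_of_le_pi_div_two (by linarith) hxpi2 hxb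
      simp only [hf, abs_of_nonneg hcos0]
      rw [min_eq_right (by rw [mul_comm]; exact (le_div_iff₀ hl).mp hcosx),
          min_eq_left (by rw [mul_comm]; exact (div_le_iff₀ hl).mp hsinx)]
      ring
    rw [this, intervalIntegral.integral_const_mul, integral_cos, Real.sin_pi_div_two, hsinφb]
    field_simp
  rw [hsplit, p1, p2, p3]
  ring
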